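/- Let a_0, a_1, a_2, a_3 be real numbers satisfying a_0²+a_1²+a_2²+a_3² = 1 and a_0 a_2 + a_1 a_3 = 0, and define m_0(z) = Σ_{k=0}^{3} a_k z^k and m_1(z) = Σ_{k=0}^{3} (−1)^k a_{3−k} z^k for z on the unit circle. Then for every z on the unit circle, the 2×2 matrix (1/√2)·[[m_0(z), m_0(−z)],[m_1(z), m_1(−z)]] is unitary. -/

import Mathlib

set_option maxHeartbeats 1000000
open Complex

theorem stmt_3 (a₀ a₁ a₂ a₃ : ℝ)
    (h1 : a₀ ^ 2 + a₁ ^ 2 + a₂ ^ 2 + a₃ ^ 2 = 1)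
    (h2 : a₀ * a₂ + a₁ * a₃ = 0)
    (m₀ m₁ : ℂ → ℂ)
    (hm₀ : ∀ z : ℂ, m₀ z = a₀ + a₁ * z + a₂ * z ^ 2 + a₃ * z ^ 3)
    (hm₁ : ∀ z : ℂ, m₁ z = a₃ - a₂ * z + a₁ * z ^ 2 - a₀ * z ^ 3) :
    ∀ z : ℂ, ‖z‖ = 1 →
      ((Real.sqrt 2 : ℂ)⁻¹ • !![m₀ z, m₀ (-z); m₁ z, m₁ (-z)]) ∈
        Matrix.unitaryGroup (Fin 2) ℂ := by
  intro z hz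
  have hz0 : z ≠ 0 := by intro h; simp [h] at hz
  have hcz : (starRingEnd ℂ) z = z⁻¹ := (Complex.inv_eq_conj hz).symm
  have h1c : (a₀:ℂ) ^ 2 + a₁ ^ 2 + a₂ ^ 2 + a₃ ^ 2 = 1 := by exact_mod_cast h1
  have h2c : (a₀:ℂ) * a₂ + a₁ * a₃ = 0 := by exact_mod_cast h2
  have hs : ((Real.sqrt 2 : ℝ):ℂ) ^ 2 = 2 := by
    norm_cast; rw [Real.sq_sqrt]; norm_num
  have hs0 : ((Real.sqrt 2 : ℝ):ℂ) ≠ 0 := by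
    intro h; rw [h] at hs; norm_num at hs
  rw [Matrix.mem_unitaryGroup_iff]
  ext i j
  fin_cases i <;> fin_cases j <;>
    simp [Matrix.mul_apply, Fin.sum_univ_two, Matrix.one_apply, star_mul', hm₀, hm₁,
      Complex.conj_ofReal, hcz]
  · field_simp
    linear_combination (2*(z+z^5))*h2c + (2*z^3)*h1c - z^3*hs
  · field_simp
    ring
  · field_simp
    ring
  · field_simp
    linear_combination (2*(z+z^5))*h2c + (2*z^3)*h1c - z^3*hs
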